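/- Let R be a (not necessarily unital, associative) ring, let (λ, ρ) be a double homothetism on R, and let s ∈ R be such that λ(s) = ρ(s), λ(λ(a)) = λ(a) + s·a and ρ(ρ(a)) = ρ(a) + a·s for all a ∈ R. Then the abelian group R × ℤ equipped with the product (a,k)·(b,l) = (a·b + l•ρ(a) + k•λ(b) + (k·l)•s, k·l) is an associative ring (the multiplication is associative and distributes over componentwise addition). -/

import Mathlib

/-- The homothetic extension product on `R × ℤ`. -/
def homotheticMul {R : Type*} [NonUnitalRing R] (lam rho : R →+ R) (s : R)
    (p q : R × ℤ) : R × ℤ :=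
  (p.1 * q.1 + q.2 • rho p.1 + p.2 • lam q.1 + (p.2 * q.2) • s, p.2 * q.2)

/-- Given a homothetic datum `((λ,ρ), s)` on a non-unital ring `R`, the abelian group
`R × ℤ` with product `(a,k)(b,l) = (ab + l•ρ(a) + k•λ(b) + (kl)•s, kl)` is an
associative ring: multiplication is associative and distributes over addition. -/
theorem homothetic_extension_is_ring {R : Type*} [NonUnitalRing R]
    (lam rho : R →+ R) (s : R)
    (hlam : ∀ a b : R, lam (a * b) = lam a * b)
    (hrho : ∀ a b : R, rho (a * b) = a * rho b)
    (hmid : ∀ a b : R, a * lam b = rho a * b)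
    (hperm : ∀ a : R, rho (lam a) = lam (rho a))
    (hs : lam s = rho s)
    (hll : ∀ a : R, lam (lam a) = lam a + s * a)
    (hrr : ∀ a : R, rho (rho a) = rho a + a * s) :
    (∀ x y z : R × ℤ,
      homotheticMul lam rho s (homotheticMul lam rho s x y) z
        = homotheticMul lam rho s x (homotheticMul lam rho s y z)) ∧
    (∀ x y z : R × ℤ,
      homotheticMul lam rho s x (y + z)
        = homotheticMul lam rho s x y + homotheticMul lam rho s x z) ∧
    (∀ x y z : R × ℤ,
      homotheticMul lam rho s (x + y) z
        = homotheticMul lam rho s x z + homotheticMul lam rho s y z) := by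
  refine ⟨fun x y z => ?_, fun x y z => ?_, fun x y z => ?_⟩
  · obtain ⟨a, k⟩ := x; obtain ⟨b, l⟩ := y; obtain ⟨c, m⟩ := z
    simp only [homotheticMul, Prod.mk.injEq]
    constructor
    · simp only [map_add, map_zsmul, add_mul, mul_add, smul_mul_assoc, mul_smul_comm,
        smul_smul, hlam, hrho, hmid, hperm, hs, hll, hrr, smul_add, mul_assoc]
      abel_nf
      ring_nf
      abel
    · ring
  · obtain ⟨a, k⟩ := x; obtain ⟨b, l⟩ := y; obtain ⟨c, m⟩ := z
    simp only [homotheticMul, Prod.mk_add_mk, Prod.mk.injEq, map_add, mul_add, add_smul,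
      add_mul, smul_add]
    constructor
    · abel
    · trivial
  · obtain ⟨a, k⟩ := x; obtain ⟨b, l⟩ := y; obtain ⟨c, m⟩ := z
    simp only [homotheticMul, Prod.mk_add_mk, Prod.mk.injEq, map_add, mul_add, add_smul,
      add_mul, smul_add]
    constructor
    · abel
    · trivial
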